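/- Let μ ∈ ℝ and ν > 0, and let X be a real random variable with Gaussian law N(μ, ν²). Then E[Φ(X)] = Φ(μ/√(1 + ν²)). -/

import Mathlib

open MeasureTheory ProbabilityTheory Real
open scoped NNReal ENNReal

lemma aux_refl (F : ℝ → ℝ) (c : ℝ) : ∫ u, F (c - u) = ∫ u, F u := by
  have h1 : ∀ u : ℝ, F (c - u) = (fun y => F (-y)) (u - c) := by intro u; simp [neg_sub]
  simp_rw [h1]
  rw [integral_sub_right_eq_self (fun y => F (-y)) c]
  exact integral_neg_eq_self F volume

lemma aux_f1 (t : ℝ) : gaussianPDFReal 0 1 t = Real.exp (-t ^ 2 / 2) / Real.sqrt (2 * Real.pi) := by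
  simp [gaussianPDFReal, div_eq_inv_mul, mul_comm]

/-- The standard normal cumulative distribution function
`Φ(x) = ∫_{−∞}^x e^{−t²/2}/√(2π) dt`. -/
noncomputable def stdNormalCDF (x : ℝ) : ℝ :=
  ∫ t in Set.Iic x, Real.exp (-t ^ 2 / 2) / Real.sqrt (2 * Real.pi)

lemma stdNormalCDF_eq (x : ℝ) :
    stdNormalCDF x = ∫ t in Set.Iic x, gaussianPDFReal 0 1 t := by
  unfold stdNormalCDF; exact (setIntegral_congr_fun measurableSet_Iic (fun t _ => (aux_f1 t).symm))

lemma stdNormalCDF_mono : Monotone stdNormalCDF := by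
  intro a b hab
  rw [stdNormalCDF_eq, stdNormalCDF_eq]
  exact setIntegral_mono_set (integrable_gaussianPDFReal 0 1).integrableOn
    (ae_of_all _ (gaussianPDFReal_nonneg 0 1)) (ae_of_all _ (fun t ht => le_trans ht hab))

lemma stdNormalCDF_meas : Measurable stdNormalCDF := stdNormalCDF_mono.measurable

lemma conv_eq (μ ν : ℝ) (hν : 0 < ν) (u : ℝ) :
    ∫ x, gaussianPDFReal μ ⟨ν^2, sq_nonneg ν⟩ x * gaussianPDFReal 0 1 (x - u)
      = gaussianPDFReal μ ⟨1 + ν^2, by positivity⟩ u := by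
  have hν2 : (0:ℝ) < ν^2 := by positivity
  have hw : (0:ℝ) < 1 + ν^2 := by positivity
  set A : ℝ := (1+ν^2)/(2*ν^2) with hA
  have hApos : 0 < A := by positivity
  set m : ℝ := (μ + ν^2*u)/(1+ν^2) with hm
  set B : ℝ := (u-μ)^2/(2*(1+ν^2)) with hB
  have key : ∀ x : ℝ, gaussianPDFReal μ ⟨ν^2, sq_nonneg ν⟩ x * gaussianPDFReal 0 1 (x - u)
      = ((Real.sqrt (2*π*ν^2))⁻¹ * (Real.sqrt (2*π))⁻¹ * Real.exp (-B))
          * Real.exp (-A*(x-m)^2) := by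
    intro x
    simp only [gaussianPDFReal, NNReal.coe_mk, NNReal.coe_one, sub_zero, mul_one]
    change (Real.sqrt (2*π*ν^2))⁻¹ * rexp (-(x-μ)^2/(2*ν^2)) * ((Real.sqrt (2*π))⁻¹ * rexp (-(x-u)^2/2)) = _
    have hx : -(x-μ)^2/(2*ν^2) + (-(x-u)^2/2) = -B + (-A*(x-m)^2) := by
      rw [hB, hA, hm]; field_simp; ring
    rw [mul_mul_mul_comm, ← Real.exp_add, hx, Real.exp_add, ← mul_assoc]
  have hint : ∫ x, Real.exp (-A*(x-m)^2) = Real.sqrt (π / A) := by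
    rw [integral_sub_right_eq_self (fun y => Real.exp (-A*y^2)) m, integral_gaussian]
  rw [show (fun x => gaussianPDFReal μ ⟨ν^2, sq_nonneg ν⟩ x * gaussianPDFReal 0 1 (x - u))
      = fun x => ((Real.sqrt (2*π*ν^2))⁻¹ * (Real.sqrt (2*π))⁻¹ * Real.exp (-B))
          * Real.exp (-A*(x-m)^2) from funext key]
  rw [integral_const_mul, hint]
  have s2 : Real.sqrt (2*π) ≠ 0 := by positivity
  have s3 : Real.sqrt (1+ν^2) ≠ 0 := by positivity
  have s1 : Real.sqrt (2*π*ν^2) ≠ 0 := by positivity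
  have h1 : π/A = (2*π*ν^2)/(1+ν^2) := by rw [hA]; field_simp
  have hc : Real.sqrt (π / A) = Real.sqrt (2*π*ν^2) / Real.sqrt (1+ν^2) := by
    rw [h1, Real.sqrt_div (by positivity)]
  rw [hc]
  simp only [gaussianPDFReal, NNReal.coe_mk]
  change _ = (Real.sqrt (2*π*(1+ν^2)))⁻¹ * rexp (-(u-μ)^2/(2*(1+ν^2)))
  rw [Real.sqrt_mul (by positivity : (0:ℝ) ≤ 2*π) (1+ν^2), hB]
  field_simp

lemma tail_eq (μ ν : ℝ) (hν : 0 < ν) :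
    ∫ u in Set.Ici 0, gaussianPDFReal μ ⟨1 + ν^2, by positivity⟩ u
      = stdNormalCDF (μ / Real.sqrt (1 + ν^2)) := by
  have hw : (0:ℝ) < 1 + ν^2 := by positivity
  set σ : ℝ := Real.sqrt (1 + ν^2) with hσdef
  have hσ : 0 < σ := Real.sqrt_pos.mpr hw
  have hσ2 : σ^2 = 1 + ν^2 := Real.sq_sqrt hw.le
  set F : ℝ → ℝ := Set.indicator (Set.Ici 0) (gaussianPDFReal μ ⟨1 + ν^2, by positivity⟩) with hF
  have hval : ∀ s : ℝ, gaussianPDFReal μ ⟨1 + ν^2, by positivity⟩ (μ - σ * s)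
      = σ⁻¹ * gaussianPDFReal 0 1 s := by
    intro s
    simp only [gaussianPDFReal, NNReal.coe_mk, NNReal.coe_one, sub_zero, mul_one]
    change (Real.sqrt (2*π*(1+ν^2)))⁻¹ * rexp (-(μ - σ*s - μ)^2/(2*(1+ν^2))) = _
    have he : -(μ - σ*s - μ)^2/(2*(1+ν^2)) = -s^2/2 := by
      rw [← hσ2]; field_simp; ring
    rw [he]
    have hc : Real.sqrt (2*π*(1+ν^2)) = Real.sqrt (2*π) * σ := by
      rw [← hσ2, hσdef, ← Real.sqrt_mul (by positivity : (0:ℝ) ≤ 2*π), hσ2]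
    rw [hc, mul_inv]
    ring
  have hpt : ∀ s : ℝ, F (μ - σ * s)
      = Set.indicator (Set.Iic (μ/σ)) (fun t => σ⁻¹ * gaussianPDFReal 0 1 t) s := by
    intro s
    have hmem : (μ - σ * s ∈ Set.Ici (0:ℝ)) ↔ s ∈ Set.Iic (μ/σ) := by
      simp only [Set.mem_Ici, Set.mem_Iic, sub_nonneg, le_div_iff₀ hσ]
      constructor <;> intro h <;> nlinarith
    by_cases h : s ∈ Set.Iic (μ/σ)
    · rw [Set.indicator_of_mem h, hF, Set.indicator_of_mem (hmem.mpr h), hval]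
    · rw [Set.indicator_of_notMem h, hF, Set.indicator_of_notMem (fun hh => h (hmem.mp hh))]
  have step1 : ∫ u in Set.Ici (0:ℝ), gaussianPDFReal μ ⟨1 + ν^2, by positivity⟩ u = ∫ u, F u := by
    rw [hF, integral_indicator measurableSet_Ici]
  have step2 : ∫ u, F u = ∫ u, F (μ - u) := (aux_refl F μ).symm
  have step3 : (∫ s, F (μ - σ * s)) = |σ⁻¹| • ∫ u, F (μ - u) :=
    Measure.integral_comp_mul_left (fun u => F (μ - u)) σ
  have step4 : ∫ u, F (μ - u) = σ * ∫ s, F (μ - σ * s) := by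
    rw [step3, abs_of_pos (inv_pos.mpr hσ), smul_eq_mul]
    field_simp
  rw [step1, step2, step4]
  have step5 : (∫ s, F (μ - σ * s))
      = ∫ s, Set.indicator (Set.Iic (μ/σ)) (fun t => σ⁻¹ * gaussianPDFReal 0 1 t) s := by
    exact integral_congr_ae (ae_of_all _ hpt)
  rw [step5, integral_indicator measurableSet_Iic, stdNormalCDF_eq, integral_const_mul]
  field_simp

lemma stdNormalCDF_nonneg (x : ℝ) : 0 ≤ stdNormalCDF x := by
  rw [stdNormalCDF_eq]
  exact setIntegral_nonneg measurableSet_Iic (fun t _ => gaussianPDFReal_nonneg 0 1 t)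

lemma stdNormalCDF_le_one (x : ℝ) : stdNormalCDF x ≤ 1 := by
  rw [stdNormalCDF_eq, ← integral_gaussianPDFReal_eq_one 0 one_ne_zero]
  exact setIntegral_le_integral (integrable_gaussianPDFReal 0 1)
    (ae_of_all _ (gaussianPDFReal_nonneg 0 1))

/-- If `X ~ N(μ, ν²)` then `E[Φ(X)] = Φ(μ/√(1 + ν²))`. -/
theorem stmt_1 {Ω : Type*} [MeasurableSpace Ω] (P : Measure Ω) [IsProbabilityMeasure P]
    (μ ν : ℝ) (hν : 0 < ν) (X : Ω → ℝ) (hX : Measurable X)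
    (hlaw : P.map X = gaussianReal μ ⟨ν ^ 2, sq_nonneg ν⟩) :
    ∫ ω, stdNormalCDF (X ω) ∂P = stdNormalCDF (μ / Real.sqrt (1 + ν ^ 2)) := by
  set v : ℝ≥0 := ⟨ν ^ 2, sq_nonneg ν⟩ with hvdef
  have hv : v ≠ 0 := by
    intro h
    have : (v : ℝ) = 0 := by rw [h]; simp
    simp only [hvdef, NNReal.coe_mk] at this
    have h0 : ν ^ 2 = 0 := this
    nlinarith
  set g : ℝ → ℝ := gaussianPDFReal μ v with hg
  set f1 : ℝ → ℝ := gaussianPDFReal 0 1 with hf1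
  -- Step A: transport to the Gaussian law
  rw [← integral_map hX.aemeasurable stdNormalCDF_meas.aestronglyMeasurable, hlaw]
  -- Step B: withDensity
  rw [gaussianReal_of_var_ne_zero μ hv,
    show gaussianPDF μ v = (fun x => ((fun x => (gaussianPDFReal μ v x).toNNReal) x : ℝ≥0∞))
      from rfl,
    integral_withDensity_eq_integral_smul ((measurable_gaussianPDFReal μ v).real_toNNReal) _]
  have hB : ∀ x, (gaussianPDFReal μ v x).toNNReal • stdNormalCDF x = g x * stdNormalCDF x := by
    intro x
    rw [NNReal.smul_def, Real.coe_toNNReal _ (gaussianPDFReal_nonneg μ v x), smul_eq_mul, hg]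
  simp_rw [hB]
  -- Step C: express stdNormalCDF as an integral over Ici 0
  have hΦ : ∀ x : ℝ, stdNormalCDF x
      = ∫ u, Set.indicator (Set.Ici 0) (fun u => f1 (x - u)) u := by
    intro x
    rw [stdNormalCDF_eq, ← integral_indicator measurableSet_Iic,
      ← aux_refl (Set.indicator (Set.Iic x) f1) x]
    refine integral_congr_ae (ae_of_all _ fun u => ?_)
    simp [Set.indicator_apply, sub_le_self_iff]
  -- define the two-variable function
  set H : ℝ → ℝ → ℝ := fun x u => g x * Set.indicator (Set.Ici 0) (fun u => f1 (x - u)) u with hH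
  have hC : ∀ x, g x * stdNormalCDF x = ∫ u, H x u := by
    intro x
    rw [hΦ x, ← integral_const_mul]
  simp_rw [hC]
  -- Integrability on the product space
  have hf1meas : Measurable f1 := measurable_gaussianPDFReal 0 1
  have hgmeas : Measurable g := measurable_gaussianPDFReal μ v
  have hHmeas : AEStronglyMeasurable (Function.uncurry H) (volume.prod volume) := by
    have h1 : Function.uncurry H = fun p : ℝ × ℝ => g p.1 *
        Set.indicator (Set.univ ×ˢ Set.Ici 0) (fun p : ℝ × ℝ => f1 (p.1 - p.2)) p := by
      funext p
      simp only [Function.uncurry, hH]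
      by_cases h : p.2 ∈ Set.Ici (0:ℝ)
      · rw [Set.indicator_of_mem h, Set.indicator_of_mem (by simp [h])]
      · rw [Set.indicator_of_notMem h, Set.indicator_of_notMem (by simp [h])]
    rw [h1]
    exact ((hgmeas.comp measurable_fst).mul
      (((hf1meas.comp (measurable_fst.sub measurable_snd)).indicator
        (MeasurableSet.univ.prod measurableSet_Ici)))).aestronglyMeasurable
  have hint_inner : ∀ x : ℝ, Integrable (fun u => H x u) := by
    intro x
    have : Integrable (fun u => f1 (x - u)) := by
      have := (Measure.measurePreserving_sub_left (volume : Measure ℝ) x).integrable_comp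
        hf1meas.aestronglyMeasurable
      exact this.mpr (integrable_gaussianPDFReal 0 1)
    exact ((this.indicator measurableSet_Ici).const_mul (g x))
  have hHint : Integrable (Function.uncurry H) (volume.prod volume) := by
    rw [integrable_prod_iff hHmeas]
    constructor
    · exact ae_of_all _ hint_inner
    · have heq : ∀ x : ℝ, (∫ u, ‖H x u‖) = g x * stdNormalCDF x := by
        intro x
        have hnn : ∀ u, 0 ≤ H x u := fun u =>
          mul_nonneg (gaussianPDFReal_nonneg μ v x)
            (Set.indicator_nonneg (fun u _ => gaussianPDFReal_nonneg 0 1 _) u)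
        calc (∫ u, ‖H x u‖) = ∫ u, H x u := by
              refine integral_congr_ae (ae_of_all _ fun u => ?_)
              exact Real.norm_of_nonneg (hnn u)
          _ = g x * stdNormalCDF x := (hC x).symm
      simp only [Function.uncurry_apply_pair]
      simp_rw [heq]
      refine Integrable.mono' (integrable_gaussianPDFReal μ v)
        ((hgmeas.mul stdNormalCDF_meas).aestronglyMeasurable) (ae_of_all _ fun x => ?_)
      rw [Real.norm_of_nonneg (mul_nonneg (gaussianPDFReal_nonneg μ v x) (stdNormalCDF_nonneg x))]
      calc g x * stdNormalCDF x ≤ g x * 1 :=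
            mul_le_mul_of_nonneg_left (stdNormalCDF_le_one x) (gaussianPDFReal_nonneg μ v x)
        _ = g x := mul_one _
  -- Fubini
  rw [integral_integral_swap hHint]
  -- inner integral is the convolution
  have hD : ∀ u : ℝ, (∫ x, H x u)
      = Set.indicator (Set.Ici 0) (gaussianPDFReal μ ⟨1 + ν^2, by positivity⟩) u := by
    intro u
    by_cases h : u ∈ Set.Ici (0:ℝ)
    · rw [Set.indicator_of_mem h]
      simp only [hH, Set.indicator_of_mem h]
      exact conv_eq μ ν hν u
    · rw [Set.indicator_of_notMem h]
      simp only [hH, Set.indicator_of_notMem h, mul_zero, integral_zero]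
  simp_rw [hD]
  rw [integral_indicator measurableSet_Ici, tail_eq μ ν hν]
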